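/- Let k be a field and let A be a 3×3 matrix over k of rank exactly 2. Then there exist 3×4 matrices P₁, P₂ over k, each of rank 3, whose kernels in k⁴ are distinct, such that (P₁ *ᵥ ξ) ⬝ᵥ (A *ᵥ (P₂ *ᵥ ξ)) = 0 for every ξ ∈ k⁴. -/

import Mathlib

open Matrix

private lemma two_proper_submodules {K M : Type*} [Field K] [AddCommGroup M] [Module K M]
    (p q : Submodule K M) (hp : p ≠ ⊤) (hq : q ≠ ⊤) : ∃ x, x ∉ p ∧ x ∉ q := by
  obtain ⟨a, ha⟩ : ∃ a, a ∉ p := by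
    by_contra h; push_neg at h; exact hp (Submodule.eq_top_iff'.mpr h)
  obtain ⟨b, hb⟩ : ∃ b, b ∉ q := by
    by_contra h; push_neg at h; exact hq (Submodule.eq_top_iff'.mpr h)
  by_cases haq : a ∈ q
  · by_cases hbp : b ∈ p
    · refine ⟨a + b, fun h => ha ?_, fun h => hb ?_⟩
      · have := p.sub_mem h hbp; simpa using this
      · have := q.sub_mem h haq; simpa using this
    · exact ⟨b, hbp, hb⟩
  · exact ⟨a, ha, haq⟩

/-- Every rank-2 matrix arises as the fundamental matrix of a pair of
cameras with distinct centers. -/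
theorem rank_two_is_fundamental_matrix {k : Type*} [Field k]
    (A : Matrix (Fin 3) (Fin 3) k) (hA : A.rank = 2) :
    ∃ P₁ P₂ : Matrix (Fin 3) (Fin 4) k,
      P₁.rank = 3 ∧ P₂.rank = 3 ∧
      LinearMap.ker P₁.mulVecLin ≠ LinearMap.ker P₂.mulVecLin ∧
      ∀ ξ : Fin 4 → k, (P₁ *ᵥ ξ) ⬝ᵥ (A *ᵥ (P₂ *ᵥ ξ)) = 0 := by
  classical
  set f := A.mulVecLin with hfdef
  have hA' : Module.finrank k (LinearMap.range f) = 2 := hA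
  -- a nonzero left-kernel vector v
  have hAT : Module.finrank k (LinearMap.range Aᵀ.mulVecLin) = 2 := by
    have : Aᵀ.rank = 2 := by rw [Matrix.rank_transpose]; exact hA
    exact this
  have hkerT : LinearMap.ker Aᵀ.mulVecLin ≠ ⊥ := by
    intro h
    have h3 := Aᵀ.mulVecLin.finrank_range_add_finrank_ker
    rw [h, finrank_bot, hAT] at h3
    simp at h3
  obtain ⟨v, hvker, hv0⟩ := (Submodule.ne_bot_iff _).mp hkerT
  have hvA : Aᵀ *ᵥ v = 0 := hvker
  -- the functional w ↦ v ⬝ᵥ w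
  let φ : (Fin 3 → k) →ₗ[k] k :=
    { toFun := fun w => v ⬝ᵥ w
      map_add' := fun a b => by simp [dotProduct_add]
      map_smul' := fun c a => by simp [dotProduct_smul] }
  have hφtop : LinearMap.ker φ ≠ ⊤ := by
    intro h
    apply hv0
    apply dotProduct_eq_zero v
    intro w
    have hw : w ∈ LinearMap.ker φ := h.symm ▸ Submodule.mem_top
    exact hw
  have hrange : LinearMap.range f ≠ ⊤ := by
    intro h
    rw [h, finrank_top] at hA'
    simp at hA'
  -- pick e outside the column space with v ⬝ᵥ e ≠ 0
  obtain ⟨e, heR, heφ⟩ := two_proper_submodules (LinearMap.range f) (LinearMap.ker φ) hrange hφtop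
  have hve : v ⬝ᵥ e ≠ 0 := fun h => heφ (LinearMap.mem_ker.mpr h)
  -- the cross-product matrix and the cameras
  set C : Matrix (Fin 3) (Fin 3) k := !![0, -e 2, e 1; e 2, 0, -e 0; -e 1, e 0, 0] with hCdef
  have hC : ∀ u, C *ᵥ u = crossProduct e u := by
    intro u; funext i
    fin_cases i <;>
      simp [hCdef, cross_apply, mulVec, dotProduct, Fin.sum_univ_three] <;> ring
  set B : Matrix (Fin 3) (Fin 3) k := C * A with hBdef
  have hBx : ∀ x, B *ᵥ x = crossProduct e (A *ᵥ x) := by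
    intro x; rw [hBdef, ← Matrix.mulVec_mulVec, hC]
  set P₁ : Matrix (Fin 3) (Fin 4) k := Matrix.of fun i j =>
    if (j : ℕ) = 0 then B i 0 else if (j : ℕ) = 1 then B i 1 else
      if (j : ℕ) = 2 then B i 2 else v i with hP₁def
  set P₂ : Matrix (Fin 3) (Fin 4) k := Matrix.of fun i j =>
    if (j : ℕ) = (i : ℕ) then 1 else 0 with hP₂def
  -- restriction and extension of vectors
  let res : (Fin 4 → k) → (Fin 3 → k) := fun ξ i => ξ i.castSucc
  let ext : (Fin 3 → k) → (Fin 4 → k) := fun x j =>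
    if (j : ℕ) = 0 then x 0 else if (j : ℕ) = 1 then x 1 else
      if (j : ℕ) = 2 then x 2 else 0
  have h3v : ((3 : Fin 4) : ℕ) = 3 := rfl
  have c0 : (Fin.castSucc (0 : Fin 3)) = (0 : Fin 4) := rfl
  have c1 : (Fin.castSucc (1 : Fin 3)) = (1 : Fin 4) := rfl
  have c2 : (Fin.castSucc (2 : Fin 3)) = (2 : Fin 4) := rfl
  have hres_ext : ∀ x, res (ext x) = x := by
    intro x; funext i
    fin_cases i <;> simp [res, ext, c0, c1, c2]
  have hext3 : ∀ x, ext x 3 = 0 := by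
    intro x; simp [ext, h3v]
  have hP₂v : ∀ ξ, P₂ *ᵥ ξ = res ξ := by
    intro ξ; funext i
    fin_cases i <;>
      simp [hP₂def, mulVec, dotProduct, Fin.sum_univ_four, res, c0, c1, c2, h3v]
  have hP₁v : ∀ ξ, P₁ *ᵥ ξ = B *ᵥ (res ξ) + ξ 3 • v := by
    intro ξ; funext i
    simp [hP₁def, mulVec, dotProduct, Fin.sum_univ_four, Fin.sum_univ_three, res, c0, c1, c2, h3v]
    ring
  -- the distinguished kernel vector of P₂
  let ξ₀ : Fin 4 → k := fun j => if (j : ℕ) = 3 then 1 else 0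
  have hξ₀res : res ξ₀ = 0 := by
    funext i; fin_cases i <;> simp [res, ξ₀, c0, c1, c2]
  have hξ₀3 : ξ₀ 3 = 1 := by simp [ξ₀, h3v]
  have hP₂ξ₀ : P₂ *ᵥ ξ₀ = 0 := by rw [hP₂v, hξ₀res]
  have hP₁ξ₀ : P₁ *ᵥ ξ₀ = v := by rw [hP₁v, hξ₀res, hξ₀3]; simp
  have hkerne : LinearMap.ker P₁.mulVecLin ≠ LinearMap.ker P₂.mulVecLin := by
    intro h
    have h1 : ξ₀ ∈ LinearMap.ker P₂.mulVecLin := by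
      rw [LinearMap.mem_ker, mulVecLin_apply, hP₂ξ₀]
    rw [← h, LinearMap.mem_ker, mulVecLin_apply, hP₁ξ₀] at h1
    exact hv0 h1
  -- rank of P₂
  have hsur₂ : Function.Surjective P₂.mulVecLin := by
    intro w
    exact ⟨ext w, by rw [mulVecLin_apply, hP₂v, hres_ext]⟩
  have hrank₂ : P₂.rank = 3 := by
    show Module.finrank k (LinearMap.range P₂.mulVecLin) = 3
    rw [LinearMap.range_eq_top.mpr hsur₂, finrank_top]
    simp
  refine ⟨P₁, P₂, ?_, hrank₂, hkerne, ?_⟩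
  · -- rank of P₁
    apply le_antisymm
    · simpa using P₁.rank_le_card_height
    · -- exhibit three independent vectors in the range of P₁
      obtain ⟨b⟩ : Nonempty (Module.Basis (Fin 2) k (LinearMap.range f)) :=
        ⟨Module.finBasisOfFinrankEq k _ hA'⟩
      set u₁ : Fin 3 → k := (b 0 : Fin 3 → k) with hu₁
      set u₂ : Fin 3 → k := (b 1 : Fin 3 → k) with hu₂
      have hu₁m : u₁ ∈ LinearMap.range f := (b 0).2
      have hu₂m : u₂ ∈ LinearMap.range f := (b 1).2
      have hbli : LinearIndependent k (fun i : Fin 2 => ((b i : Fin 3 → k))) :=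
        b.linearIndependent.map' (LinearMap.range f).subtype (Submodule.ker_subtype _)
      set t : Fin 3 → (Fin 3 → k) := ![crossProduct e u₁, crossProduct e u₂, v] with htdef
      have htmem : ∀ i, t i ∈ LinearMap.range P₁.mulVecLin := by
        have hcross : ∀ z ∈ LinearMap.range f, crossProduct e z ∈ LinearMap.range P₁.mulVecLin := by
          rintro z ⟨x, rfl⟩
          refine ⟨ext x, ?_⟩
          rw [mulVecLin_apply, hP₁v, hres_ext, hext3, hBx]
          simp [hfdef]
        intro i
        fin_cases i
        · simpa [htdef] using hcross u₁ hu₁m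
        · simpa [htdef] using hcross u₂ hu₂m
        · exact (show t 2 ∈ _ by
            simpa [htdef] using (⟨ξ₀, hP₁ξ₀⟩ : v ∈ LinearMap.range P₁.mulVecLin))
      have hLI : LinearIndependent k t := by
        rw [Fintype.linearIndependent_iff]
        intro g hg
        have hg' : g 0 • crossProduct e u₁ + g 1 • crossProduct e u₂ + g 2 • v = 0 := by
          simpa [Fin.sum_univ_three, htdef] using hg
        have hg2 : g 2 = 0 := by
          have hd : e ⬝ᵥ (g 0 • crossProduct e u₁) + e ⬝ᵥ (g 1 • crossProduct e u₂)
              + e ⬝ᵥ (g 2 • v) = 0 := by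
            rw [← dotProduct_add, ← dotProduct_add, hg', dotProduct_zero]
          rw [dotProduct_smul, dotProduct_smul, dotProduct_smul,
            dot_self_cross, dot_self_cross, smul_zero, smul_zero, zero_add, zero_add,
            smul_eq_mul] at hd
          rcases mul_eq_zero.mp hd with h | h
          · exact h
          · exact absurd (by rw [dotProduct_comm]; exact h) hve
        set z : Fin 3 → k := g 0 • u₁ + g 1 • u₂ with hzdef
        have hzm : z ∈ LinearMap.range f :=
          Submodule.add_mem _ (Submodule.smul_mem _ _ hu₁m) (Submodule.smul_mem _ _ hu₂m)
        have hz : crossProduct e z = 0 := by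
          have : g 0 • crossProduct e u₁ + g 1 • crossProduct e u₂ = 0 := by
            have := hg'; rw [hg2] at this; simpa using this
          rw [hzdef, map_add, LinearMap.map_smul, LinearMap.map_smul, this]
        have hznot : ¬ LinearIndependent k ![e, z] := by
          rw [← crossProduct_ne_zero_iff_linearIndependent]
          simp [hz]
        rw [linearIndependent_fin2] at hznot
        push_neg at hznot
        have hz0 : z = 0 := by
          by_contra hz0
          obtain ⟨a, haz⟩ := hznot (by simpa using hz0)
          simp only [Matrix.cons_val_one, Matrix.head_cons, Matrix.cons_val_zero] at haz
          apply heR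
          have hm : a • z ∈ LinearMap.range f := Submodule.smul_mem _ _ hzm
          exact haz ▸ hm
        have hb01 : g 0 • u₁ + g 1 • u₂ = 0 := by rw [← hzdef]; exact hz0
        rw [hu₁, hu₂] at hb01
        have h01 : g 0 = 0 ∧ g 1 = 0 := by
          have := Fintype.linearIndependent_iff.mp hbli ![g 0, g 1] (by
            rw [Fin.sum_univ_two]
            simp only [Matrix.cons_val_zero, Matrix.cons_val_one, Matrix.head_cons]
            exact hb01)
          exact ⟨this 0, this 1⟩
        intro i
        fin_cases i
        · exact h01.1
        · exact h01.2
        · exact hg2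
      show 3 ≤ Module.finrank k (LinearMap.range P₁.mulVecLin)
      have hspan : Submodule.span k (Set.range t) ≤ LinearMap.range P₁.mulVecLin :=
        Submodule.span_le.mpr (Set.range_subset_iff.mpr htmem)
      calc (3 : ℕ) = Module.finrank k (Submodule.span k (Set.range t)) := by
            rw [finrank_span_eq_card hLI]; simp
        _ ≤ _ := Submodule.finrank_mono hspan
  · -- the epipolar constraint
    intro ξ
    rw [hP₁v ξ, hP₂v ξ]
    set x := res ξ
    set u := A *ᵥ x with hudef
    rw [hBx, add_dotProduct, smul_dotProduct]
    have h2 : crossProduct e u ⬝ᵥ u = 0 := by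
      rw [dotProduct_comm]; exact dot_cross_self e u
    have h3 : v ⬝ᵥ u = 0 := by
      rw [hudef, Matrix.dotProduct_mulVec, ← Matrix.mulVec_transpose, hvA,
        zero_dotProduct]
    rw [h2, h3]
    simp
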